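/- Suppose u : [0,T] × S → ℝ is such that u(T,·) = g, and for all x and almost every t ∈ [0,T], u'(t,x) + ∫_A r(t,x,a,μ) π(da|x,t) + ∫_S u(t,y) ∫_A q(dy|t,x,a,μ) π(da|x,t) ≥ 0 for every admissible μ. Then, assuming the Dynkin-type identity E_x[u(T,ξ_T)] − u(0,x) = E_x[∫₀^T (u'(t,ξ_t) + ∫_S u(t,y) q(dy|t,ξ_t, π, ψ)) dt] holds for every opponent policy ψ, it follows that u(0,x) ≤ E_x[∫₀^T r(t,ξ_t,π,ψ) dt] + E_x[g(ξ_T)] = W(x,π,ψ) for every ψ, hence u(0,x) ≤ inf_ψ W(x,π,ψ) ≤ L(x). -/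
import Mathlib


open MeasureTheory Real

/-- Verification argument (Theorem 4.1): if `u(T,·) = g`, the differential inequality
`u' + r̄ + Qu ≥ 0` holds along the process for every opponent policy, and the Dynkin
formula holds, then `u(0,x) ≤ W(x,π₀,ψ)` for every `ψ`, hence
`u(0,x) ≤ inf_ψ W(x,π₀,ψ) ≤ L(x) = sup_π inf_ψ W(x,π,ψ)`. -/
theorem verification_argument
    {S Ω Pi Psi : Type*} [MeasurableSpace Ω] [Nonempty Pi] [Nonempty Psi]
    (T : ℝ) (hT : 0 < T)
    (g : S → ℝ) (u : ℝ → S → ℝ) (hterm : ∀ y, u T y = g y)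
    (x : S)
    (π₀ : Pi)
    (P : Psi → Measure Ω) (hP : ∀ ψ, IsProbabilityMeasure (P ψ))
    (ξ : ℝ → Ω → S)
    -- `D t ω` is `u'(t, ξ_t(ω))`; `Q ψ t ω` is `∫_S u(t,y) q(dy|t,ξ_t(ω),π₀,ψ)`;
    -- `R ψ t ω` is `∫∫ r(t,ξ_t(ω),a,b) π₀(da) ψ(db)`.
    (D : ℝ → Ω → ℝ) (Q R : Psi → ℝ → Ω → ℝ)
    (hineq : ∀ ψ (ω : Ω), ∀ᵐ t ∂(volume.restrict (Set.Icc 0 T)),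
      0 ≤ D t ω + R ψ t ω + Q ψ t ω)
    (hintR : ∀ ψ, Integrable (fun ω => ∫ t in (0:ℝ)..T, R ψ t ω) (P ψ))
    (hintDQ : ∀ ψ, Integrable (fun ω => ∫ t in (0:ℝ)..T, (D t ω + Q ψ t ω)) (P ψ))
    (hintRt : ∀ ψ ω, IntegrableOn (fun t => R ψ t ω) (Set.Icc 0 T))
    (hintDQt : ∀ ψ ω, IntegrableOn (fun t => D t ω + Q ψ t ω) (Set.Icc 0 T))
    (hintg : ∀ ψ, Integrable (fun ω => g (ξ T ω)) (P ψ))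
    (hdynkin : ∀ ψ, (∫ ω, u T (ξ T ω) ∂(P ψ)) - u 0 x
      = ∫ ω, (∫ t in (0:ℝ)..T, (D t ω + Q ψ t ω)) ∂(P ψ))
    (W : Pi → Psi → ℝ)
    (hW : ∀ ψ, W π₀ ψ
      = (∫ ω, (∫ t in (0:ℝ)..T, R ψ t ω) ∂(P ψ)) + ∫ ω, g (ξ T ω) ∂(P ψ))
    (hWbelow : ∀ p : Pi, BddBelow (Set.range fun ψ => W p ψ))
    (hLbdd : BddAbove (Set.range fun p : Pi => ⨅ ψ, W p ψ)) :
    (∀ ψ, u 0 x ≤ W π₀ ψ) ∧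
    u 0 x ≤ (⨅ ψ, W π₀ ψ) ∧ (⨅ ψ, W π₀ ψ) ≤ ⨆ p : Pi, ⨅ ψ, W p ψ := by
  have key : ∀ ψ, u 0 x ≤ W π₀ ψ := by
    intro ψ
    have hpt : ∀ ω : Ω, -(∫ t in (0:ℝ)..T, R ψ t ω) ≤ ∫ t in (0:ℝ)..T, (D t ω + Q ψ t ω) := by
      intro ω
      rw [intervalIntegral.integral_of_le hT.le, intervalIntegral.integral_of_le hT.le,
        ← MeasureTheory.integral_neg]
      apply MeasureTheory.setIntegral_mono_ae_restrict
      · exact (((hintRt ψ ω).mono_set Set.Ioc_subset_Icc_self).neg)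
      · exact (hintDQt ψ ω).mono_set Set.Ioc_subset_Icc_self
      · have := ae_restrict_of_ae_restrict_of_subset (Set.Ioc_subset_Icc_self) (hineq ψ ω)
        filter_upwards [this] with t ht
        linarith
    have h1 : -(∫ ω, (∫ t in (0:ℝ)..T, R ψ t ω) ∂(P ψ))
        ≤ ∫ ω, (∫ t in (0:ℝ)..T, (D t ω + Q ψ t ω)) ∂(P ψ) := by
      rw [← MeasureTheory.integral_neg]
      exact MeasureTheory.integral_mono ((hintR ψ).neg) (hintDQ ψ) (fun ω => hpt ω)
    have hd := hdynkin ψ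
    have hg : (∫ ω, u T (ξ T ω) ∂(P ψ)) = ∫ ω, g (ξ T ω) ∂(P ψ) := by
      simp [hterm]
    rw [hW ψ]
    rw [hg] at hd
    linarith
  refine ⟨key, le_ciInf key, le_ciSup hLbdd π₀⟩
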